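/- Let ν > 0, h(ξ) = ξ², and let player types be uniformly distributed on [1, 2] in a two-player Tullock contest with equilibrium strategy β(c) = ν/(4c − 2). Then the optimal prize function V*(ξ) = [ β^{-1}(ξ)·h(ξ) − ∫_{ν/6}^{ξ} h(t) d(β^{-1}(t)) ] / p(ξ), where p(ξ) = ∫_1^2 ξ/(ξ + β(c)) dc, has the closed form V*(ξ) = ( ξ²/2 + ν·ξ/2 − ν²/24 ) / ( 1 − (ν/(4ξ))·log( (6ξ + ν)/(2ξ + ν) ) ) for every ξ ∈ [ν/6, ν/2]. -/

import Mathlib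

lemma deriv_inv_aux (ν t : ℝ) (ht : t ≠ 0) :
    deriv (fun s : ℝ => ν / (4 * s) + 1 / 2) t = -ν / (4 * t ^ 2) := by
  have h : HasDerivAt (fun s : ℝ => ν / (4 * s) + 1 / 2)
      ((0 * (4 * t) - ν * 4) / (4 * t) ^ 2) t := by
    have hd : HasDerivAt (fun s : ℝ => 4 * s) 4 t := by
      simpa using (hasDerivAt_id t).const_mul 4
    exact ((hasDerivAt_const t ν).div hd (by simpa using ht)).add_const _
  rw [h.deriv]
  field_simp
  ring

/-- the closed form of the optimal prize function in the two-player case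
study with `h ξ = ξ²`, types uniform on `[1, 2]`, equilibrium strategy
`β c = ν / (4 c - 2)` and inverse `β⁻¹ ξ = ν / (4 ξ) + 1 / 2`:
`V* ξ = (ξ²/2 + νξ/2 - ν²/24) / (1 - (ν/(4ξ)) log ((6ξ + ν)/(2ξ + ν)))`. -/
theorem tullock_case_study_optimal_prize (ν : ℝ) (hν : 0 < ν) :
    ∀ ξ ∈ Set.Icc (ν / 6) (ν / 2),
      ((ν / (4 * ξ) + 1 / 2) * ξ ^ 2
          - ∫ t in (ν / 6)..ξ, t ^ 2 * deriv (fun s : ℝ => ν / (4 * s) + 1 / 2) t)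
        / (∫ c in (1 : ℝ)..2, ξ / (ξ + ν / (4 * c - 2)))
      = (ξ ^ 2 / 2 + ν * ξ / 2 - ν ^ 2 / 24)
        / (1 - ν / (4 * ξ) * Real.log ((6 * ξ + ν) / (2 * ξ + ν))) := by
  rintro ξ ⟨h1, h2⟩
  have hν6 : 0 < ν / 6 := by linarith
  have hξ : 0 < ξ := lt_of_lt_of_le hν6 h1
  -- first integral
  have hI1 : (∫ t in (ν / 6)..ξ, t ^ 2 * deriv (fun s : ℝ => ν / (4 * s) + 1 / 2) t)
      = -ν / 4 * (ξ - ν / 6) := by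
    rw [intervalIntegral.integral_congr (g := fun _ => -ν / 4)]
    · simp only [intervalIntegral.integral_const, smul_eq_mul]; ring
    · intro t ht
      rw [Set.uIcc_of_le h1] at ht
      have ht0 : 0 < t := lt_of_lt_of_le hν6 ht.1
      show t ^ 2 * deriv (fun s : ℝ => ν / (4 * s) + 1 / 2) t = -ν / 4
      rw [deriv_inv_aux ν t ht0.ne']
      field_simp
  -- second integral
  have hI2 : (∫ c in (1 : ℝ)..2, ξ / (ξ + ν / (4 * c - 2)))
      = 1 - ν / (4 * ξ) * Real.log ((6 * ξ + ν) / (2 * ξ + ν)) := by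
    have key : ∀ c ∈ Set.uIcc (1 : ℝ) 2,
        HasDerivAt (fun c => c - ν / (4 * ξ) * Real.log (4 * ξ * c - 2 * ξ + ν))
          (ξ / (ξ + ν / (4 * c - 2))) c := by
      intro c hc
      rw [Set.uIcc_of_le (by norm_num)] at hc
      have hc1 : (1 : ℝ) ≤ c := hc.1
      have hc2 : c ≤ 2 := hc.2
      have hden : 0 < 4 * ξ * c - 2 * ξ + ν := by nlinarith
      have hl : HasDerivAt (fun c => 4 * ξ * c - 2 * ξ + ν) (4 * ξ) c := by
        simpa using (((hasDerivAt_id c).const_mul (4 * ξ)).sub_const (2 * ξ)).add_const ν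
      have hlog := (Real.hasDerivAt_log hden.ne').comp c hl
      have := ((hasDerivAt_id c).sub ((hlog.const_mul (ν / (4 * ξ)))))
      refine this.congr_deriv ?_
      have h42 : (0:ℝ) < 4 * c - 2 := by linarith
      have hpos : 0 < ξ + ν / (4 * c - 2) := by positivity
      field_simp
      ring
    have hcont : IntervalIntegrable (fun c => ξ / (ξ + ν / (4 * c - 2)))
        MeasureTheory.volume 1 2 := by
      apply ContinuousOn.intervalIntegrable
      apply ContinuousOn.div continuousOn_const
      · apply ContinuousOn.add continuousOn_const
        apply ContinuousOn.div continuousOn_const (by fun_prop)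
        intro c hc
        rw [Set.uIcc_of_le (by norm_num)] at hc
        have : (0:ℝ) < 4 * c - 2 := by linarith [hc.1]
        exact this.ne'
      · intro c hc
        rw [Set.uIcc_of_le (by norm_num)] at hc
        have h42 : (0:ℝ) < 4 * c - 2 := by linarith [hc.1]
        have : 0 < ξ + ν / (4 * c - 2) := by positivity
        exact this.ne'
    rw [intervalIntegral.integral_eq_sub_of_hasDerivAt key hcont]
    have h6 : 0 < 6 * ξ + ν := by linarith
    have h2' : 0 < 2 * ξ + ν := by linarith
    rw [Real.log_div h6.ne' h2'.ne']
    have e1 : 4 * ξ * 2 - 2 * ξ + ν = 6 * ξ + ν := by ring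
    have e2 : 4 * ξ * 1 - 2 * ξ + ν = 2 * ξ + ν := by ring
    rw [e1, e2]
    ring
  rw [hI1, hI2]
  congr 1
  field_simp
  ring
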